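/- For two gauge transformations γ, γ' on a trivial quantum vector bundle and a connection one-form β : A → Γ_B, applying the gauge transformation rule twice satisfies (β^γ)^{γ'} = β^{γ'*γ}. -/

import Mathlib

/- STATEMENT 4: For two gauge transformations γ, γ' and a connection one-form
β : A → Γ_B, applying the gauge transformation rule β^γ = γ*β*γ⁻¹ + γ*d(γ⁻¹)
twice satisfies (β^γ)^{γ'} = β^{γ'*γ}.
Model: (Γ_B, d) sits inside a differential algebra Ω via ι : B → Ω. -/

open TensorProduct

noncomputable def convAA {k A Ω : Type*} [Field k] [Ring A] [HopfAlgebra k A]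
    [Ring Ω] [Algebra k Ω] (f g : A →ₗ[k] Ω) : A →ₗ[k] Ω :=
  (LinearMap.mul' k Ω) ∘ₗ (TensorProduct.map f g) ∘ₗ Coalgebra.comul

/-- Convolution of maps A → B. -/
noncomputable def convB {k A B : Type*} [Field k] [Ring A] [HopfAlgebra k A]
    [Ring B] [Algebra k B] (f g : A →ₗ[k] B) : A →ₗ[k] B :=
  (LinearMap.mul' k B) ∘ₗ (TensorProduct.map f g) ∘ₗ Coalgebra.comul

/-- The gauge transform β^γ = γ*β*γ⁻¹ + γ*d(γ⁻¹) of a connection one-form. -/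
noncomputable def gaugeTransform {k A B Ω : Type*} [Field k] [Ring A]
    [HopfAlgebra k A] [Ring B] [Algebra k B] [Ring Ω] [Algebra k Ω]
    (ι : B →ₐ[k] Ω) (d : Ω →ₗ[k] Ω) (γ γinv : A →ₗ[k] B) (β : A →ₗ[k] Ω) :
    A →ₗ[k] Ω :=
  convAA (ι.toLinearMap ∘ₗ γ) (convAA β (ι.toLinearMap ∘ₗ γinv)) +
    convAA (ι.toLinearMap ∘ₗ γ) (d ∘ₗ ι.toLinearMap ∘ₗ γinv)

section Aux

open Coalgebra

variable {k A B Ω : Type*} [Field k] [Ring A] [HopfAlgebra k A]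
  [Ring B] [Algebra k B] [Ring Ω] [Algebra k Ω]

lemma convAA_repr (f g : A →ₗ[k] Ω) {a : A} {I : Type*} (r : Coalgebra.Repr k a I) :
    convAA f g a = ∑ i ∈ r.index, f (r.left i) * g (r.right i) := by
  simp only [convAA, LinearMap.comp_apply, ← r.eq, map_sum, TensorProduct.map_tmul,
    LinearMap.mul'_apply]

lemma convAA_assoc (f g h : A →ₗ[k] Ω) :
    convAA (convAA f g) h = convAA f (convAA g h) := by
  ext a
  set r := ℛ k a with hr
  have key := Coalgebra.sum_tmul_tmul_eq r (fun i => ℛ k (r.left i)) (fun i => ℛ k (r.right i))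
  have key2 := congrArg
    (LinearMap.mul' k Ω ∘ₗ TensorProduct.map f (LinearMap.mul' k Ω ∘ₗ TensorProduct.map g h)) key
  simp only [map_sum, LinearMap.comp_apply, TensorProduct.map_tmul, LinearMap.mul'_apply] at key2
  calc convAA (convAA f g) h a
      = ∑ i ∈ r.index, convAA f g (r.left i) * h (r.right i) := convAA_repr _ _ r
    _ = ∑ i ∈ r.index, ∑ j ∈ (ℛ k (r.left i)).index,
          f ((ℛ k (r.left i)).left j) * ((g ((ℛ k (r.left i)).right j)) * h (r.right i)) := by
        refine Finset.sum_congr rfl fun i _ => ?_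
        rw [convAA_repr f g (ℛ k (r.left i)), Finset.sum_mul]
        exact Finset.sum_congr rfl fun j _ => mul_assoc _ _ _
    _ = ∑ i ∈ r.index, ∑ j ∈ (ℛ k (r.right i)).index,
          f (r.left i) * (g ((ℛ k (r.right i)).left j) * h ((ℛ k (r.right i)).right j)) := key2
    _ = ∑ i ∈ r.index, f (r.left i) * convAA g h (r.right i) := by
        refine Finset.sum_congr rfl fun i _ => ?_
        rw [convAA_repr g h (ℛ k (r.right i)), Finset.mul_sum]
    _ = convAA f (convAA g h) a := (convAA_repr _ _ r).symm

lemma convAA_one_mul (f : A →ₗ[k] Ω) :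
    convAA ((Algebra.linearMap k Ω) ∘ₗ Coalgebra.counit) f = f := by
  ext a
  have key := congrArg (TensorProduct.lid k Ω)
    (Coalgebra.sum_counit_tmul_map_eq f a (repr := ℛ k a))
  simp only [map_sum, TensorProduct.lid_tmul, one_smul] at key
  rw [convAA_repr _ f (ℛ k a)]
  rw [← key]
  refine Finset.sum_congr rfl fun i _ => ?_
  simp [Algebra.smul_def]

lemma convAA_mul_one (f : A →ₗ[k] Ω) :
    convAA f ((Algebra.linearMap k Ω) ∘ₗ Coalgebra.counit) = f := by
  ext a
  have key := congrArg (TensorProduct.rid k Ω)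
    (Coalgebra.sum_map_tmul_counit_eq f a (repr := ℛ k a))
  simp only [map_sum, TensorProduct.rid_tmul, one_smul] at key
  rw [convAA_repr f _ (ℛ k a)]
  rw [← key]
  refine Finset.sum_congr rfl fun i _ => ?_
  simp [Algebra.smul_def, ← Algebra.commutes]

lemma convAA_add_left (f g h : A →ₗ[k] Ω) :
    convAA (f + g) h = convAA f h + convAA g h := by
  ext a
  simp [convAA_repr _ _ (ℛ k a), add_mul, Finset.sum_add_distrib]

lemma convAA_add_right (f g h : A →ₗ[k] Ω) :
    convAA f (g + h) = convAA f g + convAA f h := by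
  ext a
  simp [convAA_repr _ _ (ℛ k a), mul_add, Finset.sum_add_distrib]

lemma comp_convB (ι : B →ₐ[k] Ω) (f g : A →ₗ[k] B) :
    ι.toLinearMap ∘ₗ convB f g = convAA (ι.toLinearMap ∘ₗ f) (ι.toLinearMap ∘ₗ g) := by
  ext a
  have h1 : convB f g a = ∑ i ∈ (ℛ k a).index, f ((ℛ k a).left i) * g ((ℛ k a).right i) := by
    simp only [convB, LinearMap.comp_apply, ← (ℛ k a).eq, map_sum, TensorProduct.map_tmul,
      LinearMap.mul'_apply]
  simp only [LinearMap.comp_apply, h1, map_sum, AlgHom.toLinearMap_apply, map_mul,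
    convAA_repr (ι.toLinearMap ∘ₗ f) (ι.toLinearMap ∘ₗ g) (ℛ k a)]

lemma comp_counit (ι : B →ₐ[k] Ω) :
    ι.toLinearMap ∘ₗ ((Algebra.linearMap k B) ∘ₗ Coalgebra.counit) =
      (Algebra.linearMap k Ω) ∘ₗ (Coalgebra.counit (A := A)) := by
  ext a
  simp [AlgHom.commutes]

lemma leibniz_convB (ι : B →ₐ[k] Ω) (d : Ω →ₗ[k] Ω)
    (hLeib : ∀ b c : B, d (ι b * ι c) = d (ι b) * ι c + ι b * d (ι c))
    (f g : A →ₗ[k] B) :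
    d ∘ₗ ι.toLinearMap ∘ₗ convB f g =
      convAA (d ∘ₗ ι.toLinearMap ∘ₗ f) (ι.toLinearMap ∘ₗ g) +
        convAA (ι.toLinearMap ∘ₗ f) (d ∘ₗ ι.toLinearMap ∘ₗ g) := by
  ext a
  have h1 : convB f g a = ∑ i ∈ (ℛ k a).index, f ((ℛ k a).left i) * g ((ℛ k a).right i) := by
    simp only [convB, LinearMap.comp_apply, ← (ℛ k a).eq, map_sum, TensorProduct.map_tmul,
      LinearMap.mul'_apply]
  simp only [LinearMap.comp_apply, LinearMap.add_apply, h1, map_sum, AlgHom.toLinearMap_apply,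
    map_mul, hLeib,
    convAA_repr (d ∘ₗ ι.toLinearMap ∘ₗ f) (ι.toLinearMap ∘ₗ g) (ℛ k a),
    convAA_repr (ι.toLinearMap ∘ₗ f) (d ∘ₗ ι.toLinearMap ∘ₗ g) (ℛ k a),
    Finset.sum_add_distrib]

end Aux

theorem gaugeTransform_comp {k A B Ω : Type*} [Field k] [Ring A]
    [HopfAlgebra k A] [Ring B] [Algebra k B] [Ring Ω] [Algebra k Ω]
    (ι : B →ₐ[k] Ω) (d : Ω →ₗ[k] Ω)
    (hLeib : ∀ b c : B, d (ι b * ι c) = d (ι b) * ι c + ι b * d (ι c))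
    (γ γinv γ' γ'inv : A →ₗ[k] B)
    (hγ₁ : convB γ γinv = (Algebra.linearMap k B) ∘ₗ Coalgebra.counit)
    (hγ₂ : convB γinv γ = (Algebra.linearMap k B) ∘ₗ Coalgebra.counit)
    (hγ'₁ : convB γ' γ'inv = (Algebra.linearMap k B) ∘ₗ Coalgebra.counit)
    (hγ'₂ : convB γ'inv γ' = (Algebra.linearMap k B) ∘ₗ Coalgebra.counit)
    (hγone : γ 1 = 1) (hγ'one : γ' 1 = 1)
    (β : A →ₗ[k] Ω) :
    gaugeTransform ι d γ' γ'inv (gaugeTransform ι d γ γinv β) =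
      gaugeTransform ι d (convB γ' γ) (convB γinv γ'inv) β := by
  set G := ι.toLinearMap ∘ₗ γ with hG
  set Gi := ι.toLinearMap ∘ₗ γinv with hGi
  set G' := ι.toLinearMap ∘ₗ γ' with hG'
  set Gi' := ι.toLinearMap ∘ₗ γ'inv with hGi'
  have hGGi : convAA G Gi = (Algebra.linearMap k Ω) ∘ₗ Coalgebra.counit := by
    rw [hG, hGi, ← comp_convB, hγ₁, comp_counit]
  have t1 : convAA (convAA G' G) (convAA β (convAA Gi Gi')) =
      convAA G' (convAA (convAA G (convAA β Gi)) Gi') := by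
    rw [convAA_assoc G', convAA_assoc G, convAA_assoc β]
  have t2 : convAA (convAA G' G) (convAA (d ∘ₗ Gi) Gi') =
      convAA G' (convAA (convAA G (d ∘ₗ Gi)) Gi') := by
    rw [convAA_assoc G', convAA_assoc G]
  have t3 : convAA (convAA G' G) (convAA Gi (d ∘ₗ Gi')) =
      convAA G' (d ∘ₗ Gi') := by
    rw [convAA_assoc G', ← convAA_assoc G, hGGi, convAA_one_mul]
  have hR : gaugeTransform ι d (convB γ' γ) (convB γinv γ'inv) β =
      convAA (convAA G' G) (convAA β (convAA Gi Gi')) +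
        (convAA (convAA G' G) (convAA (d ∘ₗ Gi) Gi') +
          convAA (convAA G' G) (convAA Gi (d ∘ₗ Gi'))) := by
    rw [gaugeTransform, leibniz_convB ι d hLeib γinv γ'inv, comp_convB ι γ' γ,
      comp_convB ι γinv γ'inv, convAA_add_right]
  rw [hR, t1, t2, t3]
  simp only [gaugeTransform]
  rw [convAA_add_left, convAA_add_right]
  abel
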